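/- Every graph G contains a spanning subgraph H with edge-connectivity λ(H) ≥ λ(G) and chromatic number χ(H) ≤ λ(G) + 1. -/

import Mathlib

/-- `d_G(X)`: the number of edges of `G` leaving `X`. -/
noncomputable def cutCard {V : Type*} (G : SimpleGraph V) (X : Set V) : ℕ :=
  {p : V × V | G.Adj p.1 p.2 ∧ p.1 ∈ X ∧ p.2 ∉ X}.ncard

/-- The edge-connectivity `λ(G)`. -/
noncomputable def edgeConn {V : Type*} (G : SimpleGraph V) : ℕ :=
  sInf {n : ℕ | ∃ X : Set V, X.Nonempty ∧ X ≠ Set.univ ∧ cutCard G X = n}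

section
variable {V : Type*} [Fintype V]

noncomputable def eSet (G : SimpleGraph V) (A B : Set V) : Finset (V × V) :=
  @Finset.filter _ (fun p => G.Adj p.1 p.2 ∧ p.1 ∈ A ∧ p.2 ∈ B) (Classical.decPred _) Finset.univ

lemma mem_eSet {G : SimpleGraph V} {A B : Set V} {p : V × V} :
    p ∈ eSet G A B ↔ G.Adj p.1 p.2 ∧ p.1 ∈ A ∧ p.2 ∈ B := by
  simp [eSet]

lemma cutCard_eq (G : SimpleGraph V) (X : Set V) :
    cutCard G X = (eSet G X Xᶜ).card := by
  rw [cutCard, ← Set.ncard_coe_finset]; congr 1; ext p; simp [mem_eSet]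

/-- delete the edge uv -/
def delEdge (H : SimpleGraph V) (u v : V) : SimpleGraph V where
  Adj a b := H.Adj a b ∧ ¬(a = u ∧ b = v) ∧ ¬(a = v ∧ b = u)
  symm := ⟨by intro a b h; exact ⟨h.1.symm, fun ⟨p, q⟩ => h.2.2 ⟨q, p⟩, fun ⟨p, q⟩ => h.2.1 ⟨q, p⟩⟩⟩
  loopless := ⟨fun a h => H.loopless.irrefl a h.1⟩

lemma delEdge_le (H : SimpleGraph V) (u v : V) : delEdge H u v ≤ H := fun _ _ h => h.1

lemma delEdge_lt {H : SimpleGraph V} {u v : V} (h : H.Adj u v) : delEdge H u v < H := by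
  refine lt_of_le_of_ne (delEdge_le H u v) fun he => ?_
  have : (delEdge H u v).Adj u v := by rw [he]; exact h
  exact this.2.1 ⟨rfl, rfl⟩

lemma delEdge_cut_same (H : SimpleGraph V) (u v : V) (X : Set V) (h : u ∈ X ↔ v ∈ X) :
    cutCard (delEdge H u v) X = cutCard H X := by
  rw [cutCard_eq, cutCard_eq]
  congr 1
  ext p
  simp only [mem_eSet, delEdge, Set.mem_compl_iff]
  constructor
  · rintro ⟨h1, h2, h3⟩; exact ⟨h1.1, h2, h3⟩
  · rintro ⟨h1, h2, h3⟩
    refine ⟨⟨h1, ?_, ?_⟩, h2, h3⟩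
    · rintro ⟨rfl, rfl⟩; exact h3 (h.mp h2)
    · rintro ⟨rfl, rfl⟩; exact h3 (h.mpr h2)

lemma delEdge_cut_cross (H : SimpleGraph V) (u v : V) (X : Set V) (hu : u ∈ X) (hv : v ∉ X) :
    cutCard H X ≤ cutCard (delEdge H u v) X + 1 := by
  classical
  rw [cutCard_eq, cutCard_eq]
  have hsub : eSet H X Xᶜ ⊆ insert (u, v) (eSet (delEdge H u v) X Xᶜ) := by
    intro p hp
    rw [mem_eSet] at hp
    rw [Finset.mem_insert, mem_eSet]
    by_cases hp1 : p = (u, v)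
    · exact Or.inl hp1
    · refine Or.inr ⟨⟨hp.1, ?_, ?_⟩, hp.2⟩
      · rintro ⟨h1, h2⟩; exact hp1 (Prod.ext h1 h2)
      · rintro ⟨h1, h2⟩
        exact (hp.2.2 : p.2 ∈ Xᶜ) (h2 ▸ hu)
  calc (eSet H X Xᶜ).card ≤ (insert (u, v) (eSet (delEdge H u v) X Xᶜ)).card :=
        Finset.card_le_card hsub
    _ ≤ (eSet (delEdge H u v) X Xᶜ).card + 1 := Finset.card_insert_le _ _

lemma delEdge_comm (H : SimpleGraph V) (u v : V) : delEdge H u v = delEdge H v u := by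
  ext a b
  simp only [delEdge]
  tauto

lemma cutCard_compl (G : SimpleGraph V) (X : Set V) : cutCard G Xᶜ = cutCard G X := by
  rw [cutCard_eq, cutCard_eq]
  apply Finset.card_bij' (fun p _ => Prod.swap p) (fun p _ => Prod.swap p) <;>
    simp only [mem_eSet, compl_compl, Prod.fst_swap, Prod.snd_swap, Prod.swap_swap] <;>
    intro p h <;> try exact ⟨h.1.symm, h.2.2, h.2.1⟩
  all_goals trivial

lemma cutCard_submod (G : SimpleGraph V) (X Y : Set V) :
    cutCard G (X ∩ Y) + cutCard G (X ∪ Y) ≤ cutCard G X + cutCard G Y := by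
  simp only [cutCard_eq, eSet, Finset.card_filter]
  rw [← Finset.sum_add_distrib, ← Finset.sum_add_distrib]
  apply Finset.sum_le_sum
  intro p _
  by_cases h0 : G.Adj p.1 p.2 <;>
  by_cases h1 : p.1 ∈ X <;> by_cases h2 : p.1 ∈ Y <;>
  by_cases h3 : p.2 ∈ X <;> by_cases h4 : p.2 ∈ Y <;>
    simp_all [Set.mem_inter_iff, Set.mem_union, Set.mem_compl_iff]

noncomputable def nbrs (H : SimpleGraph V) (v : V) (s : Finset V) : Finset V :=
  @Finset.filter _ (H.Adj v) (Classical.decPred _) s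

lemma mem_nbrs {H : SimpleGraph V} {v w : V} {s : Finset V} :
    w ∈ nbrs H v s ↔ w ∈ s ∧ H.Adj v w := by
  simp [nbrs]

lemma exists_low_degree (H : SimpleGraph V) (k : ℕ)
    (hk : ∀ X : Set V, X.Nonempty → X ≠ Set.univ → k ≤ cutCard H X)
    (hmin : ∀ u v, H.Adj u v → ∃ X : Set V, X.Nonempty ∧ X ≠ Set.univ ∧ cutCard H X = k ∧ u ∈ X ∧ v ∉ X)
    (s : Finset V) (hs : s.Nonempty) :
    ∃ v ∈ s, ((nbrs H v s).card ≤ k) := by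
  classical
  by_contra hcon
  push_neg at hcon
  -- every tight set meeting s spans an edge inside X ∩ s
  have inner : ∀ X : Set V, cutCard H X = k → ∀ u, u ∈ X → u ∈ s →
      ∃ x y, x ∈ X ∧ x ∈ s ∧ y ∈ X ∧ y ∈ s ∧ H.Adj x y := by
    intro X hX u huX hus
    by_contra hno
    push_neg at hno
    have hsub : ∀ w ∈ nbrs H u s, (u, w) ∈ eSet H X Xᶜ := by
      intro w hw
      rw [mem_nbrs] at hw
      have hwX : w ∉ X := fun hwX => hno u w huX hus hwX hw.1 hw.2
      exact mem_eSet.mpr ⟨hw.2, huX, hwX⟩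
    have hinj : Set.InjOn (fun w => ((u, w) : V × V)) ↑(nbrs H u s) :=
      fun a _ b _ h => congrArg Prod.snd h
    have hle := Finset.card_le_card_of_injOn _ hsub hinj
    rw [← cutCard_eq] at hle
    have := hcon u hus
    omega
  obtain ⟨v, hvs⟩ := hs
  have hv := hcon v hvs
  have hvne : (nbrs H v s).Nonempty := Finset.card_pos.mp (by omega)
  obtain ⟨w, hw⟩ := hvne
  rw [mem_nbrs] at hw
  obtain ⟨X0, hX01, hX02, hX03, hX04, _⟩ := hmin v w hw.2
  set M : Set ℕ := {n | ∃ X : Set V, X.Nonempty ∧ X ≠ Set.univ ∧ cutCard H X = k ∧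
    (X ∩ ↑s).Nonempty ∧ (X ∩ ↑s).ncard = n} with hMdef
  have hM : M.Nonempty := ⟨(X0 ∩ ↑s : Set V).ncard, show _ ∈ M from ⟨X0, hX01, hX02, hX03, ⟨v, hX04, hvs⟩, rfl⟩⟩
  obtain ⟨X, hX1, hX2, hX3, hX4, hX5⟩ := Nat.sInf_mem hM
  obtain ⟨u0, hu0⟩ := hX4
  obtain ⟨x, y, hxX, hxs, hyX, hys, hxy⟩ := inner X hX3 u0 hu0.1 hu0.2
  obtain ⟨Y, hY1, hY2, hY3, hxY, hyY⟩ := hmin x y hxy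
  have hfin : (X ∩ ↑s : Set V).Finite := Set.toFinite _
  by_cases hU : X ∪ Y = Set.univ
  · have hZX : Yᶜ ⊆ X := by
      intro a ha
      rcases (Set.eq_univ_iff_forall.mp hU a) with h | h
      · exact h
      · exact absurd h ha
    have hZcut : cutCard H Yᶜ = k := by rw [cutCard_compl]; exact hY3
    have hZne : (Yᶜ : Set V) ≠ Set.univ := by
      intro h
      have : x ∈ (Yᶜ : Set V) := h ▸ Set.mem_univ x
      exact this hxY
    have hZT : sInf M ≤ (Yᶜ ∩ ↑s : Set V).ncard :=
      Nat.sInf_le (show (Yᶜ ∩ ↑s : Set V).ncard ∈ M from ⟨Yᶜ, ⟨y, hyY⟩, hZne, hZcut, ⟨y, hyY, hys⟩, rfl⟩)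
    have hssub : (Yᶜ ∩ ↑s : Set V) ⊂ (X ∩ ↑s) := by
      rw [Set.ssubset_iff_subset_ne]
      constructor
      · exact Set.inter_subset_inter_left _ hZX
      · intro h
        have : x ∈ (Yᶜ ∩ ↑s : Set V) := h ▸ (⟨hxX, hxs⟩ : x ∈ (X ∩ ↑s : Set V))
        exact this.1 hxY
    have := Set.ncard_lt_ncard hssub hfin
    omega
  · have hsub := cutCard_submod H X Y
    have h1 : k ≤ cutCard H (X ∩ Y) := by
      refine hk _ ⟨x, hxX, hxY⟩ fun h => hX2 ?_
      exact Set.eq_univ_of_univ_subset (h ▸ Set.inter_subset_left)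
    have h2 : k ≤ cutCard H (X ∪ Y) := hk _ ⟨x, Or.inl hxX⟩ hU
    have hXY : cutCard H (X ∩ Y) = k := by omega
    have hIne : (X ∩ Y : Set V) ≠ Set.univ := by
      intro h
      have : y ∈ (X ∩ Y : Set V) := h ▸ Set.mem_univ y
      exact hyY this.2
    have hmem : sInf M ≤ ((X ∩ Y) ∩ ↑s : Set V).ncard :=
      Nat.sInf_le (show ((X ∩ Y) ∩ ↑s : Set V).ncard ∈ M from ⟨X ∩ Y, ⟨x, hxX, hxY⟩, hIne, hXY, ⟨x, ⟨hxX, hxY⟩, hxs⟩, rfl⟩)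
    have hssub : ((X ∩ Y) ∩ ↑s : Set V) ⊂ X ∩ ↑s := by
      rw [Set.ssubset_iff_subset_ne]
      constructor
      · exact Set.inter_subset_inter_left _ Set.inter_subset_left
      · intro h
        have : y ∈ ((X ∩ Y) ∩ ↑s : Set V) := h ▸ (⟨hyX, hys⟩ : y ∈ (X ∩ ↑s : Set V))
        exact hyY this.1.2
    have := Set.ncard_lt_ncard hssub hfin
    omega

lemma colorable_of_degen (H : SimpleGraph V) (k : ℕ)
    (hdeg : ∀ s : Finset V, s.Nonempty → ∃ v ∈ s, (nbrs H v s).card ≤ k) :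
    H.Colorable (k + 1) := by
  classical
  suffices h : ∀ s : Finset V, ∃ c : V → Fin (k + 1), ∀ a ∈ s, ∀ b ∈ s, H.Adj a b → c a ≠ c b by
    obtain ⟨c, hc⟩ := h Finset.univ
    exact ⟨SimpleGraph.Coloring.mk c fun {a b} hab =>
      hc a (Finset.mem_univ a) b (Finset.mem_univ b) hab⟩
  intro s
  induction s using Finset.strongInduction with
  | _ s ih =>
    rcases s.eq_empty_or_nonempty with rfl | hs
    · exact ⟨fun _ => 0, by simp⟩
    obtain ⟨v, hvs, hvdeg⟩ := hdeg s hs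
    obtain ⟨c, hc⟩ := ih (s.erase v) (Finset.erase_ssubset hvs)
    have himg : ((nbrs H v s).image c).card < k + 1 :=
      lt_of_le_of_lt Finset.card_image_le (by omega)
    have hcol : ∃ col : Fin (k + 1), col ∉ (nbrs H v s).image c := by
      by_contra hall
      push_neg at hall
      have hsubu : (Finset.univ : Finset (Fin (k + 1))) ⊆ (nbrs H v s).image c :=
        fun a _ => hall a
      have := Finset.card_le_card hsubu
      simp [Finset.card_univ] at this
      omega
    obtain ⟨col, hcolmem⟩ := hcol
    refine ⟨Function.update c v col, ?_⟩
    intro a ha b hb hab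
    by_cases hav : a = v <;> by_cases hbv : b = v
    · subst hav; subst hbv; exact absurd hab (H.loopless.irrefl _)
    · subst hav
      rw [Function.update_self, Function.update_of_ne hbv]
      intro h
      exact hcolmem (by rw [h]; exact Finset.mem_image_of_mem c (mem_nbrs.mpr ⟨hb, hab⟩))
    · subst hbv
      rw [Function.update_of_ne hav, Function.update_self]
      intro h
      exact hcolmem (by rw [← h]; exact Finset.mem_image_of_mem c (mem_nbrs.mpr ⟨ha, hab.symm⟩))
    · rw [Function.update_of_ne hav, Function.update_of_ne hbv]
      exact hc a (Finset.mem_erase.mpr ⟨hav, ha⟩) b (Finset.mem_erase.mpr ⟨hbv, hb⟩) hab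

end

/-- Every graph `G` contains a spanning subgraph `H` with `λ(H) ≥ λ(G)` and
`χ(H) ≤ λ(G) + 1`. -/
theorem stmt7 {V : Type*} [Fintype V] (G : SimpleGraph V) :
    ∃ H : SimpleGraph V, H ≤ G ∧ edgeConn G ≤ edgeConn H ∧
      H.chromaticNumber ≤ (edgeConn G : ℕ∞) + 1 := by
  classical
  set k := edgeConn G with hkdef
  set S : Set (SimpleGraph V) :=
    {H | H ≤ G ∧ ∀ X : Set V, X.Nonempty → X ≠ Set.univ → k ≤ cutCard H X} with hSdef
  have hGS : G ∈ S := ⟨le_refl G, fun X hX1 hX2 => Nat.sInf_le ⟨X, hX1, hX2, rfl⟩⟩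
  obtain ⟨H, hHS, hminH⟩ :=
    Set.Finite.exists_minimalFor id S (Set.toFinite S) ⟨G, hGS⟩
  -- each edge of H lies in a tight cut
  have hedge : ∀ u v, H.Adj u v →
      ∃ X : Set V, X.Nonempty ∧ X ≠ Set.univ ∧ cutCard H X = k ∧ u ∈ X ∧ v ∉ X := by
    intro u v huv
    have hlt : delEdge H u v < H := delEdge_lt huv
    have hH'G : delEdge H u v ≤ G := le_trans hlt.le hHS.1
    have hH'S : delEdge H u v ∉ S := fun hmem => (ne_of_lt hlt) (le_antisymm hlt.le (hminH hmem hlt.le))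
    have hex : ∃ X : Set V, X.Nonempty ∧ X ≠ Set.univ ∧ cutCard (delEdge H u v) X < k := by
      by_contra hcon
      push_neg at hcon
      exact hH'S ⟨hH'G, fun X h1 h2 => hcon X h1 h2⟩
    obtain ⟨X, hX1, hX2, hX3⟩ := hex
    by_cases hu : u ∈ X <;> by_cases hv : v ∈ X
    · rw [delEdge_cut_same H u v X (iff_of_true hu hv)] at hX3
      exact absurd hX3 (not_lt.mpr (hHS.2 X hX1 hX2))
    · have hle := delEdge_cut_cross H u v X hu hv
      have hge := hHS.2 X hX1 hX2
      exact ⟨X, hX1, hX2, by omega, hu, hv⟩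
    · -- v ∈ X, u ∉ X : use complement
      rw [delEdge_comm] at hX3
      have hle := delEdge_cut_cross H v u X hv hu
      have hge := hHS.2 X hX1 hX2
      have hXk : cutCard H X = k := by omega
      refine ⟨Xᶜ, ⟨u, hu⟩, ?_, ?_, hu, ?_⟩
      · intro h
        have : v ∈ (Xᶜ : Set V) := h ▸ Set.mem_univ v
        exact this hv
      · rw [cutCard_compl]; exact hXk
      · simp [hv]
    · rw [delEdge_cut_same H u v X (iff_of_false hu hv)] at hX3
      exact absurd hX3 (not_lt.mpr (hHS.2 X hX1 hX2))
  refine ⟨H, hHS.1, ?_, ?_⟩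
  · -- edge connectivity
    rw [edgeConn]
    by_cases hex : ∃ X : Set V, X.Nonempty ∧ X ≠ Set.univ
    · obtain ⟨X0, h1, h2⟩ := hex
      exact le_csInf ⟨cutCard H X0, X0, h1, h2, rfl⟩
        (by rintro n ⟨X, h1, h2, rfl⟩; exact hHS.2 X h1 h2)
    · have hkz : k = 0 := by
        have hempty : {n : ℕ | ∃ X : Set V, X.Nonempty ∧ X ≠ Set.univ ∧ cutCard G X = n} = ∅ := by
          ext n
          simp only [Set.mem_setOf_eq, Set.mem_empty_iff_false, iff_false]
          rintro ⟨X, h1, h2, _⟩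
          exact hex ⟨X, h1, h2⟩
        rw [hkdef, edgeConn, hempty, Nat.sInf_empty]
      omega
  · -- chromatic number
    have hcol : H.Colorable (k + 1) :=
      colorable_of_degen H k (exists_low_degree H k hHS.2 hedge)
    have := hcol.chromaticNumber_le
    calc H.chromaticNumber ≤ ((k + 1 : ℕ) : ℕ∞) := this
      _ = (k : ℕ∞) + 1 := by push_cast; rfl
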